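/- For a Lie algebra L and r ∈ Im(1 − τ) ⊆ L ⊗ L, the triple (L, [·,·], Δ_r) is a Lie bialgebra if and only if r satisfies the modern Yang–Baxter equation x · c(r) = 0 for all x ∈ L. -/

import Mathlib

open scoped TensorProduct
open scoped Classical

noncomputable section

variable {L : Type*} [LieRing L] [LieAlgebra ℂ L]

attribute [local instance 100] LieRing.ofAssociativeRing

/-- The bracket of `L` as a bilinear map. -/
def brMap (L : Type*) [LieRing L] [LieAlgebra ℂ L] : L →ₗ[ℂ] L →ₗ[ℂ] L :=
  (LieAlgebra.ad ℂ L : L →ₗ⁅ℂ⁆ Module.End ℂ L).toLinearMap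

/-- `c(r) = [r¹²,r¹³] + [r¹²,r²³] + [r¹³,r²³]` as an element of `L ⊗ L ⊗ L`. -/
def cybe (L : Type*) [LieRing L] [LieAlgebra ℂ L] (r : L ⊗[ℂ] L) : L ⊗[ℂ] (L ⊗[ℂ] L) :=
  let μ : L ⊗[ℂ] L →ₗ[ℂ] L := TensorProduct.lift (brMap L)
  let ttt := (TensorProduct.tensorTensorTensorComm ℂ L L L L).toLinearMap
  let c1 := (TensorProduct.map μ LinearMap.id) ∘ₗ ttt
  let c2 := (TensorProduct.map LinearMap.id (TensorProduct.map μ LinearMap.id)) ∘ₗ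
      (TensorProduct.map LinearMap.id (TensorProduct.assoc ℂ L L L).symm.toLinearMap) ∘ₗ
      (TensorProduct.assoc ℂ L L (L ⊗[ℂ] L)).toLinearMap
  let c3 := (TensorProduct.assoc ℂ L L L).toLinearMap ∘ₗ (TensorProduct.map LinearMap.id μ) ∘ₗ ttt
  c1 (r ⊗ₜ r) + c2 (r ⊗ₜ r) + c3 (r ⊗ₜ r)

/-- The twist map `τ : x ⊗ y ↦ y ⊗ x`. -/
def twist (L : Type*) [LieRing L] [LieAlgebra ℂ L] : L ⊗[ℂ] L →ₗ[ℂ] L ⊗[ℂ] L :=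
  (TensorProduct.comm ℂ L L).toLinearMap

/-- The cyclic map `ξ : x ⊗ y ⊗ z ↦ y ⊗ z ⊗ x`. -/
def cyc (L : Type*) [LieRing L] [LieAlgebra ℂ L] :
    L ⊗[ℂ] (L ⊗[ℂ] L) →ₗ[ℂ] L ⊗[ℂ] (L ⊗[ℂ] L) :=
  (TensorProduct.assoc ℂ L L L).toLinearMap ∘ₗ (TensorProduct.comm ℂ L (L ⊗[ℂ] L)).toLinearMap

/-- The coboundary `Δ_r : x ↦ x · r` as a linear map. -/
def DeltaR (r : L ⊗[ℂ] L) : L →ₗ[ℂ] L ⊗[ℂ] L where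
  toFun x := ⁅x, r⁆
  map_add' x y := add_lie x y r
  map_smul' c x := smul_lie c x r

/-! ### Auxiliary machinery -/

lemma DeltaR_apply (r : L ⊗[ℂ] L) (x : L) : DeltaR r x = ⁅x, r⁆ := rfl

lemma DeltaR_add (u v : L ⊗[ℂ] L) : DeltaR (u + v) = DeltaR u + DeltaR v := by
  ext x; simp [DeltaR_apply, lie_add]

lemma DeltaR_zero : DeltaR (0 : L ⊗[ℂ] L) = 0 := by
  ext x; simp [DeltaR_apply]

/-- The bilinearized co-Jacobi expression. -/
def Amap (u v : L ⊗[ℂ] L) : L →ₗ[ℂ] L ⊗[ℂ] (L ⊗[ℂ] L) :=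
  (LinearMap.id + cyc L + cyc L ∘ₗ cyc L) ∘ₗ TensorProduct.map LinearMap.id (DeltaR v) ∘ₗ DeltaR u

/-- The bilinearized classical Yang–Baxter expression. -/
def Cmap (u v : L ⊗[ℂ] L) : L ⊗[ℂ] (L ⊗[ℂ] L) :=
  let μ : L ⊗[ℂ] L →ₗ[ℂ] L := TensorProduct.lift (brMap L)
  let ttt := (TensorProduct.tensorTensorTensorComm ℂ L L L L).toLinearMap
  let c1 := (TensorProduct.map μ LinearMap.id) ∘ₗ ttt
  let c2 := (TensorProduct.map LinearMap.id (TensorProduct.map μ LinearMap.id)) ∘ₗ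
      (TensorProduct.map LinearMap.id (TensorProduct.assoc ℂ L L L).symm.toLinearMap) ∘ₗ
      (TensorProduct.assoc ℂ L L (L ⊗[ℂ] L)).toLinearMap
  let c3 := (TensorProduct.assoc ℂ L L L).toLinearMap ∘ₗ (TensorProduct.map LinearMap.id μ) ∘ₗ ttt
  c1 (u ⊗ₜ v) + c2 (u ⊗ₜ v) + c3 (u ⊗ₜ v)

lemma cybe_eq_Cmap (r : L ⊗[ℂ] L) : cybe L r = Cmap r r := rfl

lemma Amap_add_left (u u' v : L ⊗[ℂ] L) : Amap (u + u') v = Amap u v + Amap u' v := by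
  unfold Amap; rw [DeltaR_add, LinearMap.comp_add, LinearMap.comp_add]

lemma Amap_add_right (u v v' : L ⊗[ℂ] L) : Amap u (v + v') = Amap u v + Amap u v' := by
  ext x
  simp only [Amap, DeltaR_add, TensorProduct.map_add_right, LinearMap.coe_comp,
    Function.comp_apply, LinearMap.add_apply, map_add]

lemma Amap_zero_left (v : L ⊗[ℂ] L) : Amap 0 v = 0 := by
  unfold Amap; rw [DeltaR_zero, LinearMap.comp_zero, LinearMap.comp_zero]

lemma Amap_zero_right (u : L ⊗[ℂ] L) : Amap u 0 = 0 := by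
  unfold Amap
  rw [DeltaR_zero, TensorProduct.map_zero_right, LinearMap.zero_comp, LinearMap.comp_zero]

lemma Cmap_add_left (u u' v : L ⊗[ℂ] L) : Cmap (u + u') v = Cmap u v + Cmap u' v := by
  simp only [Cmap, TensorProduct.add_tmul, map_add]; abel

lemma Cmap_add_right (u v v' : L ⊗[ℂ] L) : Cmap u (v + v') = Cmap u v + Cmap u v' := by
  simp only [Cmap, TensorProduct.tmul_add, map_add]; abel

lemma Cmap_zero_left (v : L ⊗[ℂ] L) : Cmap 0 v = 0 := by
  simp [Cmap, TensorProduct.zero_tmul]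

lemma Cmap_zero_right (u : L ⊗[ℂ] L) : Cmap u 0 = 0 := by
  simp [Cmap, TensorProduct.tmul_zero]

set_option maxRecDepth 100000 in
set_option maxHeartbeats 1000000 in
/-- The core identity for pure tensors. -/
lemma core (a b c d x : L) :
    Amap (a ⊗ₜ[ℂ] b - b ⊗ₜ[ℂ] a) (c ⊗ₜ[ℂ] d - d ⊗ₜ[ℂ] c) x
      + Amap (c ⊗ₜ[ℂ] d - d ⊗ₜ[ℂ] c) (a ⊗ₜ[ℂ] b - b ⊗ₜ[ℂ] a) x
    = ⁅x, Cmap (a ⊗ₜ[ℂ] b - b ⊗ₜ[ℂ] a) (c ⊗ₜ[ℂ] d - d ⊗ₜ[ℂ] c)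
        + Cmap (c ⊗ₜ[ℂ] d - d ⊗ₜ[ℂ] c) (a ⊗ₜ[ℂ] b - b ⊗ₜ[ℂ] a)⁆ := by
  simp only [Amap, Cmap, cyc, twist, brMap, LinearMap.coe_comp, Function.comp_apply,
    LinearMap.add_apply, LinearMap.id_coe, id_eq, DeltaR_apply, lie_sub, lie_add, map_sub, map_add,
    TensorProduct.LieModule.lie_tmul_right, TensorProduct.map_tmul, TensorProduct.tmul_add,
    TensorProduct.add_tmul, TensorProduct.tmul_sub, TensorProduct.sub_tmul,
    LinearEquiv.coe_coe, TensorProduct.comm_tmul, TensorProduct.assoc_tmul,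
    TensorProduct.assoc_symm_tmul, TensorProduct.tensorTensorTensorComm_tmul,
    TensorProduct.lift.tmul, LieHom.coe_toLinearMap, LieAlgebra.ad_apply]
  have hswap : ∀ u v : L, ⁅⁅x,u⁆,v⁆ = -⁅v,⁅x,u⁆⁆ := fun u v => (lie_skew _ _).symm
  have hjac : ∀ u v : L, ⁅x,⁅u,v⁆⁆ = ⁅u,⁅x,v⁆⁆ - ⁅v,⁅x,u⁆⁆ := fun u v => by
    rw [leibniz_lie x u v, hswap]; abel
  simp only [hswap, hjac, show ⁅c,a⁆ = -⁅a,c⁆ from (lie_skew c a).symm,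
    show ⁅d,a⁆ = -⁅a,d⁆ from (lie_skew d a).symm,
    show ⁅c,b⁆ = -⁅b,c⁆ from (lie_skew c b).symm,
    show ⁅d,b⁆ = -⁅b,d⁆ from (lie_skew d b).symm,
    lie_neg, neg_lie, TensorProduct.tmul_neg, TensorProduct.neg_tmul, neg_neg, lie_add, lie_sub,
    TensorProduct.sub_tmul, TensorProduct.tmul_sub, TensorProduct.tmul_add,
    TensorProduct.add_tmul]
  abel

/-- The skew-symmetrizer `1 - τ`. -/
def sigmaMap (L : Type*) [LieRing L] [LieAlgebra ℂ L] : L ⊗[ℂ] L →ₗ[ℂ] L ⊗[ℂ] L :=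
  LinearMap.id - twist L

lemma sigma_tmul (a b : L) :
    sigmaMap L (a ⊗ₜ[ℂ] b) = a ⊗ₜ[ℂ] b - b ⊗ₜ[ℂ] a := by
  simp [sigmaMap, twist, TensorProduct.comm_tmul]

set_option maxHeartbeats 1000000 in
/-- The key symmetrized identity for general tensors. -/
lemma key (s t : L ⊗[ℂ] L) (x : L) :
    Amap (sigmaMap L s) (sigmaMap L t) x
      + Amap (sigmaMap L t) (sigmaMap L s) x
    = ⁅x, Cmap (sigmaMap L s) (sigmaMap L t)
        + Cmap (sigmaMap L t) (sigmaMap L s)⁆ := by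
  induction s using TensorProduct.induction_on generalizing t with
  | zero =>
      simp [Amap_zero_left, Amap_zero_right, Cmap_zero_left, Cmap_zero_right]
  | add s₁ s₂ ih₁ ih₂ =>
      rw [map_add, Amap_add_left, Amap_add_right, Cmap_add_left, Cmap_add_right,
        LinearMap.add_apply, LinearMap.add_apply]
      calc Amap (sigmaMap L s₁) (sigmaMap L t) x + Amap (sigmaMap L s₂) (sigmaMap L t) x
            + (Amap (sigmaMap L t) (sigmaMap L s₁) x + Amap (sigmaMap L t) (sigmaMap L s₂) x)
          = (Amap (sigmaMap L s₁) (sigmaMap L t) x + Amap (sigmaMap L t) (sigmaMap L s₁) x)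
            + (Amap (sigmaMap L s₂) (sigmaMap L t) x
              + Amap (sigmaMap L t) (sigmaMap L s₂) x) := by abel
        _ = ⁅x, Cmap (sigmaMap L s₁) (sigmaMap L t) + Cmap (sigmaMap L t) (sigmaMap L s₁)⁆
            + ⁅x, Cmap (sigmaMap L s₂) (sigmaMap L t)
              + Cmap (sigmaMap L t) (sigmaMap L s₂)⁆ := by rw [ih₁ t, ih₂ t]
        _ = _ := by simp only [lie_add]; abel
  | tmul a b =>
      induction t using TensorProduct.induction_on with
      | zero =>
          simp [Amap_zero_left, Amap_zero_right, Cmap_zero_left, Cmap_zero_right]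
      | add t₁ t₂ ih₁ ih₂ =>
          rw [map_add, Amap_add_right, Amap_add_left, Cmap_add_right, Cmap_add_left,
            LinearMap.add_apply, LinearMap.add_apply]
          calc Amap (sigmaMap L (a ⊗ₜ[ℂ] b)) (sigmaMap L t₁) x
                + Amap (sigmaMap L (a ⊗ₜ[ℂ] b)) (sigmaMap L t₂) x
                + (Amap (sigmaMap L t₁) (sigmaMap L (a ⊗ₜ[ℂ] b)) x
                  + Amap (sigmaMap L t₂) (sigmaMap L (a ⊗ₜ[ℂ] b)) x)
              = (Amap (sigmaMap L (a ⊗ₜ[ℂ] b)) (sigmaMap L t₁) x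
                  + Amap (sigmaMap L t₁) (sigmaMap L (a ⊗ₜ[ℂ] b)) x)
                + (Amap (sigmaMap L (a ⊗ₜ[ℂ] b)) (sigmaMap L t₂) x
                  + Amap (sigmaMap L t₂) (sigmaMap L (a ⊗ₜ[ℂ] b)) x) := by abel
            _ = ⁅x, Cmap (sigmaMap L (a ⊗ₜ[ℂ] b)) (sigmaMap L t₁)
                  + Cmap (sigmaMap L t₁) (sigmaMap L (a ⊗ₜ[ℂ] b))⁆
                + ⁅x, Cmap (sigmaMap L (a ⊗ₜ[ℂ] b)) (sigmaMap L t₂)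
                  + Cmap (sigmaMap L t₂) (sigmaMap L (a ⊗ₜ[ℂ] b))⁆ := by rw [ih₁, ih₂]
            _ = _ := by simp only [lie_add]; abel
      | tmul c d =>
          rw [sigma_tmul, sigma_tmul]
          exact core a b c d x

lemma twist_lie (x : L) (u : L ⊗[ℂ] L) : twist L ⁅x, u⁆ = ⁅x, twist L u⁆ := by
  induction u using TensorProduct.induction_on with
  | zero => simp
  | tmul a b =>
      simp [twist, TensorProduct.LieModule.lie_tmul_right, TensorProduct.comm_tmul, add_comm]
  | add u v ihu ihv => rw [lie_add, map_add, map_add, lie_add, ihu, ihv]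

/-- For `r ∈ Im(1 − τ)`, the triple `(L, [·,·], Δ_r)` is a Lie bialgebra if and
only if `r` satisfies the modern Yang–Baxter equation `x · c(r) = 0` for all `x`. -/
theorem lie_bialgebra_iff_mybe
    (L : Type*) [LieRing L] [LieAlgebra ℂ L] (r : L ⊗[ℂ] L)
    (hr : r ∈ LinearMap.range (LinearMap.id - twist L)) :
    ((∀ x : L, DeltaR r x ∈ LinearMap.range (LinearMap.id - twist L)) ∧
     (∀ x : L,
        ((LinearMap.id + cyc L + cyc L ∘ₗ cyc L) ∘ₗ
          TensorProduct.map LinearMap.id (DeltaR r) ∘ₗ DeltaR r) x = 0) ∧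
     (∀ x y : L, DeltaR r ⁅x, y⁆ = ⁅x, DeltaR r y⁆ - ⁅y, DeltaR r x⁆))
    ↔ (∀ x : L, ⁅x, cybe L r⁆ = 0) := by
  obtain ⟨s, hs⟩ := hr
  have hA : ∀ x : L,
      ((LinearMap.id + cyc L + cyc L ∘ₗ cyc L) ∘ₗ
        TensorProduct.map LinearMap.id (DeltaR r) ∘ₗ DeltaR r) x = Amap r r x := fun _ => rfl
  -- the central identity: co-Jacobiator equals `⁅x, c(r)⁆`
  have hmain : ∀ x : L, Amap r r x = ⁅x, cybe L r⁆ := by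
    intro x
    have h := key s s x
    have hs' : sigmaMap L s = r := hs
    rw [hs'] at h
    have h2 : (2 : ℂ) • Amap r r x = (2 : ℂ) • ⁅x, cybe L r⁆ := by
      rw [two_smul, two_smul, cybe_eq_Cmap]
      rw [h, lie_add]
    exact smul_right_injective _ (two_ne_zero) h2
  constructor
  · rintro ⟨-, h2, -⟩ x
    rw [← hmain x, ← hA x]
    exact h2 x
  · intro h
    refine ⟨?_, ?_, ?_⟩
    · intro x
      refine ⟨⁅x, s⁆, ?_⟩
      have key2 : sigmaMap L ⁅x, s⁆ = ⁅x, sigmaMap L s⁆ := by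
        rw [sigmaMap, LinearMap.sub_apply, LinearMap.sub_apply, LinearMap.id_apply,
          LinearMap.id_apply, twist_lie, lie_sub]
      have hs' : sigmaMap L s = r := hs
      show sigmaMap L ⁅x, s⁆ = DeltaR r x
      rw [key2, hs']; rfl
    · intro x
      rw [hA x, hmain x]
      exact h x
    · intro x y
      show ⁅⁅x, y⁆, r⁆ = ⁅x, ⁅y, r⁆⁆ - ⁅y, ⁅x, r⁆⁆
      exact lie_lie x y r
  end
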